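/- Let 𝒜 and ℬ be finite categories. Then the adjacency matrix of the product category satisfies [𝒜 × ℬ] = [𝒜] ⊗ [ℬ] (Kronecker product), and the Euler measure is multiplicative: χ(𝒜 × ℬ) = χ(𝒜)·χ(ℬ), i.e., 1ᵀ·[𝒜 × ℬ]⁺·1 = (1ᵀ·[𝒜]⁺·1)·(1ᵀ·[ℬ]⁺·1). -/
import Mathlib


open Matrix CategoryTheory
open scoped Kronecker

/-- `Y` is a Moore–Penrose inverse of `M`. -/
def IsMoorePenrose {m n : Type*} [Fintype m] [Fintype n]
    (M : Matrix m n ℚ) (Y : Matrix n m ℚ) : Prop :=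
  M * Y * M = M ∧ Y * M * Y = Y ∧ (Y * M)ᵀ = Y * M ∧ (M * Y)ᵀ = M * Y

/-- The adjacency matrix of a finite category. -/
noncomputable def adjMat (A : Type*) [SmallCategory A] [Fintype A] : Matrix A A ℚ :=
  fun a a' => (Nat.card (a ⟶ a') : ℚ)

/-- Moore–Penrose inverses are unique. -/
theorem isMoorePenrose_unique {m n : Type*} [Fintype m] [Fintype n]
    {M : Matrix m n ℚ} {Y Z : Matrix n m ℚ}
    (hY : IsMoorePenrose M Y) (hZ : IsMoorePenrose M Z) : Y = Z := by
  obtain ⟨hY1, hY2, hY3, hY4⟩ := hY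
  obtain ⟨hZ1, hZ2, hZ3, hZ4⟩ := hZ
  have hMY : M * Y = M * Z := by
    calc M * Y = (M * Y)ᵀ := hY4.symm
      _ = Yᵀ * (M * Z * M)ᵀ := by rw [hZ1, transpose_mul]
      _ = Yᵀ * (Mᵀ * (M * Z)ᵀ) := by rw [transpose_mul]
      _ = (M * Y)ᵀ * (M * Z) := by rw [hZ4, transpose_mul]; simp only [Matrix.mul_assoc]
      _ = M * Y * M * Z := by rw [hY4]; simp only [Matrix.mul_assoc]
      _ = M * Z := by rw [hY1]
  have hYM : Y * M = Z * M := by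
    calc Y * M = (Y * M)ᵀ := hY3.symm
      _ = (M * Z * M)ᵀ * Yᵀ := by rw [hZ1, transpose_mul]
      _ = (Z * M)ᵀ * Mᵀ * Yᵀ := by simp only [transpose_mul, Matrix.mul_assoc]
      _ = (Z * M) * (Y * M)ᵀ := by rw [hZ3, transpose_mul]; simp only [Matrix.mul_assoc]
      _ = Z * (M * Y * M) := by rw [hY3]; simp only [Matrix.mul_assoc]
      _ = Z * M := by rw [hY1]
  calc Y = Y * M * Y := hY2.symm
    _ = Y * (M * Z) := by rw [← hMY]; simp only [Matrix.mul_assoc]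
    _ = (Z * M) * Z := by rw [← Matrix.mul_assoc, hYM]
    _ = Z := hZ2

theorem kron_isMoorePenrose {m n : Type*} [Fintype m] [Fintype n]
    {M : Matrix m m ℚ} {Y : Matrix m m ℚ} {N : Matrix n n ℚ} {Z : Matrix n n ℚ}
    (hY : IsMoorePenrose M Y) (hZ : IsMoorePenrose N Z) :
    IsMoorePenrose (M ⊗ₖ N) (Y ⊗ₖ Z) := by
  obtain ⟨hY1, hY2, hY3, hY4⟩ := hY
  obtain ⟨hZ1, hZ2, hZ3, hZ4⟩ := hZ
  refine ⟨?_, ?_, ?_, ?_⟩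
  · rw [← mul_kronecker_mul, ← mul_kronecker_mul, hY1, hZ1]
  · rw [← mul_kronecker_mul, ← mul_kronecker_mul, hY2, hZ2]
  · rw [← mul_kronecker_mul, ← kroneckerMap_transpose, transpose_mul, transpose_mul,
      ← hY3, ← hZ3, transpose_mul, transpose_mul]
  · rw [← mul_kronecker_mul, ← kroneckerMap_transpose, transpose_mul, transpose_mul,
      ← hY4, ← hZ4, transpose_mul, transpose_mul]

/-- For finite categories `𝒜` and `ℬ`, the adjacency matrix of the product
category is the Kronecker product `[𝒜 × ℬ] = [𝒜] ⊗ [ℬ]`, and the Euler measure is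
multiplicative: `1ᵀ·[𝒜 × ℬ]⁺·1 = (1ᵀ·[𝒜]⁺·1)·(1ᵀ·[ℬ]⁺·1)`. -/
theorem chi_prod (A B : Type) [SmallCategory A] [SmallCategory B]
    [Fintype A] [Fintype B]
    [∀ a a' : A, Finite (a ⟶ a')] [∀ b b' : B, Finite (b ⟶ b')]
    (YA : Matrix A A ℚ) (hYA : IsMoorePenrose (adjMat A) YA)
    (YB : Matrix B B ℚ) (hYB : IsMoorePenrose (adjMat B) YB)
    (YAB : Matrix (A × B) (A × B) ℚ) (hYAB : IsMoorePenrose (adjMat (A × B)) YAB) :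
    adjMat (A × B) = adjMat A ⊗ₖ adjMat B ∧
      (1 : A × B → ℚ) ⬝ᵥ (YAB *ᵥ (1 : A × B → ℚ)) =
        ((1 : A → ℚ) ⬝ᵥ (YA *ᵥ (1 : A → ℚ))) * ((1 : B → ℚ) ⬝ᵥ (YB *ᵥ (1 : B → ℚ))) := by
  have hadj : adjMat (A × B) = adjMat A ⊗ₖ adjMat B := by
    ext ⟨a, b⟩ ⟨a', b'⟩
    show ((Nat.card ((a ⟶ a') × (b ⟶ b')) : ℚ)) = _
    rw [Nat.card_prod]
    push_cast
    rfl
  refine ⟨hadj, ?_⟩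
  have hkron : IsMoorePenrose (adjMat (A × B)) (YA ⊗ₖ YB) := by
    rw [hadj]; exact kron_isMoorePenrose hYA hYB
  have hEq : YAB = YA ⊗ₖ YB := isMoorePenrose_unique hYAB hkron
  rw [hEq]
  have key : ∀ p : A × B, ((YA ⊗ₖ YB) *ᵥ (1 : A × B → ℚ)) p = (YA *ᵥ 1) p.1 * (YB *ᵥ 1) p.2 := by
    intro p
    simp only [mulVec, dotProduct, kroneckerMap_apply, Pi.one_apply, mul_one,
      Fintype.sum_prod_type]
    rw [← Fintype.sum_mul_sum]
  simp only [dotProduct, key, Pi.one_apply, one_mul, Fintype.sum_prod_type]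
  rw [← Fintype.sum_mul_sum]
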